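/- arXiv:1610.01929 — 11 statements merged into one kernel-verified Lean document; each statement's English description precedes it below -/
import Mathlib

section
/- Let n ≥ 1 and for each product i ∈ {1,…,n} let v_i > 0, a_i > 0, q_i ∈ (0,1), c_i ∈ [0,1), and set p_i = v_i a_i / Σ_j v_j a_j, λ̄ = (Σ_i p_i q_i)/(1 − Σ_i p_i c_i). Define the continuation quality q̄_i = q_i/(1 − c_i) and the continuation appeal ā_i = a_i (1 − c_i). Then λ̄ = (Σ_{i=1}^n v_i ā_i q̄_i) / (Σ_{i=1}^n v_i ā_i). That is, the trial-offer market with continuation reduces to a standard trial-offer market (multinomial logit) with qualities q̄_i and appeals ā_i. -/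
/-- The trial-offer market with continuation reduces to a standard
trial-offer (multinomial logit) market with continuation qualities
`q̄ i = q i / (1 - c i)` and continuation appeals `ā i = a i * (1 - c i)`:
the expected number of purchases `λ̄ = (∑ i, p i * q i)/(1 - ∑ i, p i * c i)` equals
`(∑ i, v i * ā i * q̄ i) / (∑ i, v i * ā i)`. -/
theorem stmt1 (n : ℕ) (v a q c : Fin (n + 1) → ℝ)
    (hv : ∀ i, 0 < v i) (ha : ∀ i, 0 < a i)
    (hq : ∀ i, q i ∈ Set.Ioo (0 : ℝ) 1) (hc : ∀ i, c i ∈ Set.Ico (0 : ℝ) 1)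
    (p : Fin (n + 1) → ℝ)
    (hp : ∀ i, p i = v i * a i / ∑ j, v j * a j)
    (lamBar : ℝ)
    (hlam : lamBar = (∑ i, p i * q i) / (1 - ∑ i, p i * c i))
    (qBar aBar : Fin (n + 1) → ℝ)
    (hqBar : ∀ i, qBar i = q i / (1 - c i))
    (haBar : ∀ i, aBar i = a i * (1 - c i)) :
    lamBar = (∑ i, v i * aBar i * qBar i) / (∑ i, v i * aBar i) := by
  set S : ℝ := ∑ j, v j * a j with hS
  have hS0 : 0 < S := Finset.sum_pos (fun i _ => mul_pos (hv i) (ha i)) ⟨0, by simp⟩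
  have hci : ∀ i, (1 : ℝ) - c i ≠ 0 := fun i => by
    have := (hc i).2; linarith
  have h1 : ∀ i, v i * aBar i * qBar i = v i * a i * q i := fun i => by
    rw [hqBar, haBar]; field_simp [hci i]
  have h2 : (∑ i, v i * aBar i) = S - ∑ i, v i * a i * c i := by
    rw [← Finset.sum_sub_distrib]
    exact Finset.sum_congr rfl fun i _ => by rw [haBar]; ring
  have hpq : (∑ i, p i * q i) = (∑ i, v i * a i * q i) / S := by
    rw [Finset.sum_div]; exact Finset.sum_congr rfl fun i _ => by rw [hp]; ring
  have hpc : (∑ i, p i * c i) = (∑ i, v i * a i * c i) / S := by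
    rw [Finset.sum_div]; exact Finset.sum_congr rfl fun i _ => by rw [hp]; ring
  rw [hlam, hpq, hpc, Finset.sum_congr rfl fun i _ => h1 i, h2]
  rw [one_sub_div hS0.ne']
  have hX : S - ∑ i, v i * a i * c i ≠ 0 := by
    rw [← h2]
    exact (Finset.sum_pos (fun i _ => mul_pos (hv i) (by rw [haBar]; exact mul_pos (ha i) (by have := (hc i).2; linarith))) ⟨0, by simp⟩).ne'
  field_simp
end

section
/- Let n ≥ 1 and for each product i ∈ {1,…,n} let v_i > 0, a_i > 0, q_i ∈ (0,1), c_i ∈ [0,1). Let π* be a ranking maximizing λ(σ) over all permutations σ of {1,…,n}, and π_c* a ranking maximizing λ̄(σ) over all permutations. Then λ(π*) ≤ λ̄(π_c*) ≤ λ(π*) / (1 − max_{1≤i≤n} c_i). -/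
/-- Let `π*` maximize `λ` and `πc*` maximize `λ̄` over all rankings.
Then `λ(π*) ≤ λ̄(πc*) ≤ λ(π*) / (1 - max_i c i)`. -/
theorem stmt6 (n : ℕ) (v a q c : Fin (n + 1) → ℝ)
    (hv : ∀ i, 0 < v i) (ha : ∀ i, 0 < a i)
    (hq : ∀ i, q i ∈ Set.Ioo (0 : ℝ) 1) (hc : ∀ i, c i ∈ Set.Ico (0 : ℝ) 1)
    (p : Equiv.Perm (Fin (n + 1)) → Fin (n + 1) → ℝ)
    (hp : ∀ σ i, p σ i = v (σ i) * a i / ∑ j, v (σ j) * a j)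
    (lam lamBar : Equiv.Perm (Fin (n + 1)) → ℝ)
    (hlam : ∀ σ, lam σ = ∑ i, p σ i * q i)
    (hlamBar : ∀ σ, lamBar σ = (∑ i, p σ i * q i) / (1 - ∑ i, p σ i * c i))
    (πStar πcStar : Equiv.Perm (Fin (n + 1)))
    (hπStar : ∀ σ, lam σ ≤ lam πStar)
    (hπcStar : ∀ σ, lamBar σ ≤ lamBar πcStar) :
    lam πStar ≤ lamBar πcStar ∧
      lamBar πcStar ≤ lam πStar / (1 - Finset.univ.sup' Finset.univ_nonempty c) := by
  set M := Finset.univ.sup' Finset.univ_nonempty c with hMdef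
  obtain ⟨i0, -, hi0⟩ := Finset.exists_mem_eq_sup' Finset.univ_nonempty c
  have hM1 : M < 1 := by rw [hMdef, hi0]; exact (hc i0).2
  have hS : ∀ σ : Equiv.Perm (Fin (n + 1)), 0 < ∑ j, v (σ j) * a j :=
    fun σ => Finset.sum_pos (fun j _ => mul_pos (hv _) (ha _)) Finset.univ_nonempty
  have hppos : ∀ σ i, 0 < p σ i := fun σ i => by
    rw [hp]; exact div_pos (mul_pos (hv _) (ha _)) (hS σ)
  have hpsum : ∀ σ, ∑ i, p σ i = 1 := by
    intro σ
    simp only [hp]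
    rw [← Finset.sum_div, div_self (hS σ).ne']
  have hqpos : ∀ σ, 0 < ∑ i, p σ i * q i := fun σ =>
    Finset.sum_pos (fun i _ => mul_pos (hppos σ i) (hq i).1) Finset.univ_nonempty
  have hcM : ∀ σ, ∑ i, p σ i * c i ≤ M := by
    intro σ
    calc ∑ i, p σ i * c i ≤ ∑ i, p σ i * M :=
          Finset.sum_le_sum fun i _ =>
            mul_le_mul_of_nonneg_left (Finset.le_sup' c (Finset.mem_univ i)) (hppos σ i).le
      _ = M := by rw [← Finset.sum_mul, hpsum, one_mul]
  have hc0 : ∀ σ, 0 ≤ ∑ i, p σ i * c i := fun σ =>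
    Finset.sum_nonneg fun i _ => mul_nonneg (hppos σ i).le (hc i).1
  have hden : ∀ σ, 0 < 1 - ∑ i, p σ i * c i := fun σ =>
    sub_pos.2 (lt_of_le_of_lt (hcM σ) hM1)
  constructor
  · calc lam πStar ≤ lamBar πStar := by
          rw [hlam, hlamBar, le_div_iff₀ (hden πStar)]
          have := hqpos πStar
          have := hc0 πStar
          nlinarith
      _ ≤ lamBar πcStar := hπcStar πStar
  · rw [hlamBar, ← hlam]
    exact div_le_div₀ (le_of_lt ((hqpos πStar).trans_le (le_of_eq (hlam πStar).symm)))
      (hπStar πcStar) (sub_pos.2 hM1) (by linarith [hcM πcStar])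
end

section
/- Let n ≥ 1 and for each product i let v_i > 0, a_i > 0, q_i ∈ (0,1), and c_i = q_i (1 − q_i) (i.e., the polynomial continuation with ρ = 1 and r = 1). Let π* maximize λ(σ) and π_c* maximize λ̄(σ) over all permutations σ of {1,…,n}. Then λ̄(π_c*) ≤ (4/3) · λ(π*): the market with continuation is at most 33% more efficient. -/
/-- With the polynomial continuation `ρ = 1`, `r = 1`, i.e.
`c i = q i * (1 - q i)`, and `π*`, `πc*` maximizing `λ` and `λ̄` respectively over
all rankings, one has `λ̄(πc*) ≤ (4/3) * λ(π*)`: the market with continuation is at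
most 33% more efficient. -/
theorem stmt9 (n : ℕ) (v a q c : Fin (n + 1) → ℝ)
    (hv : ∀ i, 0 < v i) (ha : ∀ i, 0 < a i)
    (hq : ∀ i, q i ∈ Set.Ioo (0 : ℝ) 1)
    (hcdef : ∀ i, c i = q i * (1 - q i))
    (p : Equiv.Perm (Fin (n + 1)) → Fin (n + 1) → ℝ)
    (hp : ∀ σ i, p σ i = v (σ i) * a i / ∑ j, v (σ j) * a j)
    (lam lamBar : Equiv.Perm (Fin (n + 1)) → ℝ)
    (hlam : ∀ σ, lam σ = ∑ i, p σ i * q i)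
    (hlamBar : ∀ σ, lamBar σ = (∑ i, p σ i * q i) / (1 - ∑ i, p σ i * c i))
    (πStar πcStar : Equiv.Perm (Fin (n + 1)))
    (hπStar : ∀ σ, lam σ ≤ lam πStar)
    (hπcStar : ∀ σ, lamBar σ ≤ lamBar πcStar) :
    lamBar πcStar ≤ (4 / 3) * lam πStar := by
  set σ := πcStar with hσ
  have hS : 0 < ∑ j, v (σ j) * a j :=
    Finset.sum_pos (fun j _ => mul_pos (hv _) (ha _)) ⟨0, Finset.mem_univ 0⟩
  have hpnn : ∀ i, 0 ≤ p σ i := fun i => by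
    rw [hp]
    exact div_nonneg (mul_nonneg (hv _).le (ha _).le) hS.le
  have hpsum : ∑ i, p σ i = 1 := by
    simp only [hp]
    rw [← Finset.sum_div, div_self hS.ne']
  have hc4 : ∀ i, c i ≤ 1 / 4 := fun i => by
    have h := hq i
    rw [hcdef]
    nlinarith [sq_nonneg (q i - 1 / 2)]
  have hpc : ∑ i, p σ i * c i ≤ 1 / 4 := by
    calc ∑ i, p σ i * c i ≤ ∑ i, p σ i * (1 / 4) :=
          Finset.sum_le_sum (fun i _ => mul_le_mul_of_nonneg_left (hc4 i) (hpnn i))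
      _ = 1 / 4 := by rw [← Finset.sum_mul, hpsum, one_mul]
  have hpq : 0 ≤ ∑ i, p σ i * q i :=
    Finset.sum_nonneg (fun i _ => mul_nonneg (hpnn i) (hq i).1.le)
  have hden : (3 : ℝ) / 4 ≤ 1 - ∑ i, p σ i * c i := by linarith
  have h1 : lamBar σ ≤ (4 / 3) * lam σ := by
    rw [hlamBar, hlam]
    calc (∑ i, p σ i * q i) / (1 - ∑ i, p σ i * c i)
        ≤ (∑ i, p σ i * q i) / (3 / 4) :=
          div_le_div_of_nonneg_left hpq (by norm_num) hden
      _ = (4 / 3) * ∑ i, p σ i * q i := by ring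
  have h2 : lam σ ≤ lam πStar := hπStar σ
  linarith
end

section
/- Let ρ ∈ (0,1) and r ≥ 0 be real numbers. The function h(x) = x / (1 − ρ x^r (1 − x)) (with real powers, 0^0 = 1) is well defined and strictly monotonically increasing on the interval (0,1). -/
/-- For `ρ ∈ (0,1)` and real `r ≥ 0`, the function
`h x = x / (1 - ρ * x^r * (1 - x))` (real powers, `0^0 = 1`) is well defined
(its denominator is positive) and strictly monotonically increasing on `(0,1)`. -/
theorem stmt10 (ρ r : ℝ) (hρ : ρ ∈ Set.Ioo (0 : ℝ) 1) (hr : 0 ≤ r) :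
    (∀ x ∈ Set.Ioo (0 : ℝ) 1, 0 < 1 - ρ * x ^ r * (1 - x)) ∧
      StrictMonoOn (fun x : ℝ => x / (1 - ρ * x ^ r * (1 - x)))
        (Set.Ioo (0 : ℝ) 1) := by
  obtain ⟨hρ0, hρ1⟩ := hρ
  have key : ∀ x ∈ Set.Ioo (0:ℝ) 1, 0 < 1 - ρ * x ^ r * (1 - x) := by
    rintro x ⟨hx0, hx1⟩
    have hxr1 : x ^ r ≤ 1 := Real.rpow_le_one hx0.le hx1.le hr
    have hxr0 : 0 < x ^ r := Real.rpow_pos_of_pos hx0 r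
    nlinarith [mul_le_mul_of_nonneg_right (mul_le_mul_of_nonneg_left hxr1 hρ0.le) (by linarith : (0:ℝ) ≤ 1 - x)]
  refine ⟨key, ?_⟩
  rintro a ⟨ha0, ha1⟩ b ⟨hb0, hb1⟩ hab
  have Da := key a ⟨ha0, ha1⟩
  have Db := key b ⟨hb0, hb1⟩
  simp only
  rw [div_lt_div_iff₀ Da Db]
  have har1 : a ^ r ≤ 1 := Real.rpow_le_one ha0.le ha1.le hr
  have har0 : 0 < a ^ r := Real.rpow_pos_of_pos ha0 r
  have hbr0 : 0 < b ^ r := Real.rpow_pos_of_pos hb0 r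
  have hle : a ^ r ≤ b ^ r := Real.rpow_le_rpow ha0.le hab.le hr
  nlinarith [mul_pos ha0 hb0, mul_le_mul_of_nonneg_left hle (mul_nonneg ha0.le (by linarith : (0:ℝ) ≤ 1 - b)), mul_pos (sub_pos.mpr hab) har0]
end

section
/- Let ρ ∈ (0,1) and r ≥ 0 be real numbers. For every x ∈ [0,1] one has ρ x^r ((r − 1) − r x) + 1 ≥ 1 − ρ > 0, where x^r is the real power with 0^0 = 1. (This quantity is the numerator of the derivative of h(x) = x/(1 − ρ x^r(1 − x)).) -/
lemma key_ineq (r x : ℝ) (hr : 0 ≤ r) (hx0 : 0 ≤ x) (hx1 : x ≤ 1) :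
    x ^ r * (1 - r * (1 - x)) ≤ 1 := by
  rcases eq_or_lt_of_le hx0 with h0 | h0
  · -- x = 0
    rw [← h0]
    rcases eq_or_lt_of_le hr with hr0 | hr0
    · simp [← hr0]
    · rw [Real.zero_rpow (ne_of_gt hr0)]; norm_num
  · set t := r * (1 - x) with ht
    have ht0 : 0 ≤ t := mul_nonneg hr (by linarith)
    rcases le_or_gt (1 - t) 0 with h | h
    · have : x ^ r * (1 - t) ≤ 0 :=
        mul_nonpos_of_nonneg_of_nonpos (Real.rpow_nonneg hx0 r) h
      linarith
    · have hxr : x ^ r ≤ Real.exp (-t) := by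
        rw [← Real.exp_log h0, ← Real.exp_mul]
        apply Real.exp_le_exp.mpr
        have := Real.log_le_sub_one_of_pos h0
        nlinarith
      have h1 : Real.exp (-t) * (1 + t) ≤ 1 := by
        have := Real.add_one_le_exp t
        have he : 0 < Real.exp (-t) := Real.exp_pos _
        calc Real.exp (-t) * (1 + t) ≤ Real.exp (-t) * Real.exp t := by nlinarith
          _ = 1 := by rw [← Real.exp_add]; simp
      have he : 0 < Real.exp (-t) := Real.exp_pos _
      calc x ^ r * (1 - t) ≤ Real.exp (-t) * (1 - t) := by nlinarith
        _ ≤ Real.exp (-t) * (1 + t) := by nlinarith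
        _ ≤ 1 := h1

/-- For `ρ ∈ (0,1)`, real `r ≥ 0`, and every `x ∈ [0,1]`,
`ρ * x^r * ((r - 1) - r*x) + 1 ≥ 1 - ρ > 0` (real powers, `0^0 = 1`). This quantity
is the numerator of the derivative of `h x = x / (1 - ρ * x^r * (1 - x))`. -/
theorem stmt11 (ρ r : ℝ) (hρ : ρ ∈ Set.Ioo (0 : ℝ) 1) (hr : 0 ≤ r) :
    (∀ x ∈ Set.Icc (0 : ℝ) 1, 1 - ρ ≤ ρ * x ^ r * ((r - 1) - r * x) + 1) ∧
      0 < 1 - ρ := by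
  obtain ⟨hρ0, hρ1⟩ := hρ
  refine ⟨fun x hx => ?_, by linarith⟩
  obtain ⟨hx0, hx1⟩ := hx
  have key := key_ineq r x hr hx0 hx1
  nlinarith [key, hρ0.le]
end

section
/- Let ρ ∈ (0,1) and r ≥ 0, and for each product i ∈ {1,…,n} let q_i ∈ (0,1), c_i = ρ q_i^r (1 − q_i), and q̄_i = q_i/(1 − c_i). Then for all products i and j: q_i ≤ q_j if and only if q̄_i ≤ q̄_j. In particular, the quality ranking is preserved under the reduction from the continuation market to the standard trial-offer market. -/
lemma stmt12_aux (ρ r a b : ℝ) (hρ0 : 0 < ρ) (hρ1 : ρ < 1) (hr : 0 ≤ r)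
    (ha0 : 0 < a) (hb0 : 0 < b) (hb1 : b < 1) (hab : a < b) :
    a / (1 - ρ * a ^ r * (1 - a)) < b / (1 - ρ * b ^ r * (1 - b)) := by
  have ha1 : a < 1 := hab.trans hb1
  have hx0 : 0 < a ^ r := Real.rpow_pos_of_pos ha0 r
  have hy0 : 0 < b ^ r := Real.rpow_pos_of_pos hb0 r
  have hxy : a ^ r ≤ b ^ r := Real.rpow_le_rpow ha0.le hab.le hr
  have hx1 : a ^ r ≤ 1 := Real.rpow_le_one ha0.le ha1.le hr
  have hy1 : b ^ r ≤ 1 := Real.rpow_le_one hb0.le hb1.le hr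
  have hρx : ρ * a ^ r ≤ 1 := by nlinarith
  have hρy : ρ * b ^ r ≤ 1 := by nlinarith
  have hda : 0 < 1 - ρ * a ^ r * (1 - a) := by
    nlinarith [mul_nonneg (sub_nonneg.mpr hρx) (sub_nonneg.mpr ha1.le)]
  have hdb : 0 < 1 - ρ * b ^ r * (1 - b) := by
    nlinarith [mul_nonneg (sub_nonneg.mpr hρy) (sub_nonneg.mpr hb1.le)]
  rw [div_lt_div_iff₀ hda hdb]
  nlinarith [mul_nonneg (mul_nonneg (sub_nonneg.mpr hxy) hb0.le) (sub_nonneg.mpr ha1.le),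
    mul_nonneg (mul_nonneg hρ0.le (sub_nonneg.mpr hy1)) (sub_nonneg.mpr hab.le),
    mul_nonneg (sub_nonneg.mpr hρ1.le) (mul_nonneg hy0.le (sub_nonneg.mpr hab.le))]

/-- With `ρ ∈ (0,1)`, real `r ≥ 0`, qualities `q i ∈ (0,1)`,
continuation probabilities `c i = ρ * (q i)^r * (1 - q i)` (real powers, `0^0 = 1`),
and continuation qualities `q̄ i = q i / (1 - c i)`, for all products `i` and `j`:
`q i ≤ q j ↔ q̄ i ≤ q̄ j`. The quality ranking is preserved under the reduction. -/
theorem stmt12 (n : ℕ) (ρ r : ℝ) (hρ : ρ ∈ Set.Ioo (0 : ℝ) 1) (hr : 0 ≤ r)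
    (q c qBar : Fin (n + 1) → ℝ)
    (hq : ∀ i, q i ∈ Set.Ioo (0 : ℝ) 1)
    (hcdef : ∀ i, c i = ρ * q i ^ r * (1 - q i))
    (hqBar : ∀ i, qBar i = q i / (1 - c i)) :
    ∀ i j, q i ≤ q j ↔ qBar i ≤ qBar j := by
  intro i j
  have key : ∀ a b, q a < q b → qBar a < qBar b := by
    intro a b hab
    rw [hqBar, hqBar, hcdef, hcdef]
    exact stmt12_aux ρ r (q a) (q b) hρ.1 hρ.2 hr (hq a).1 (hq b).1 (hq b).2 hab
  constructor
  · intro h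
    rcases eq_or_lt_of_le h with h | h
    · rw [hqBar, hqBar, hcdef, hcdef, h]
    · exact (key i j h).le
  · intro h
    by_contra h'
    exact absurd (key j i (lt_of_not_ge h')) (not_lt.mpr h)
end

section
/- Let n ≥ 1 and for each product i ∈ {1,…,n} let v_i > 0, a_i > 0, q_i ∈ (0,1), c_i ∈ [0,1) with q_i + c_i < 1 for every i, and set ā_j = a_j(1 − c_j) and β = (Σ_{j=1}^n v_j a_j q_j)/(Σ_{j=1}^n v_j ā_j). Then 0 < β < 1 and for every product i, Σ_{m=0}^∞ (1 − β)^m · (v_i a_i q_i)/(Σ_{j=1}^n v_j ā_j) = v_i a_i q_i / Σ_{j=1}^n v_j a_j q_j. That is, the probability that the next purchase (after any number of sampling steps) is product i equals v_i a_i q_i / Σ_j v_j a_j q_j, the same as in the market without continuation. -/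
/-- With `q i + c i < 1` for all `i`, continuation appeals
`ā j = a j * (1 - c j)` and `β = (∑ j, v j * a j * q j) / (∑ j, v j * ā j)`, one has
`0 < β < 1`, and for every product `i` the probability that the next purchase is
product `i`, namely `∑' m, (1 - β)^m * (v i * a i * q i / ∑ j, v j * ā j)`, equals
`v i * a i * q i / ∑ j, v j * a j * q j` — the same as in the market without
continuation. -/
theorem stmt13 (n : ℕ) (v a q c aBar : Fin (n + 1) → ℝ)
    (hv : ∀ i, 0 < v i) (ha : ∀ i, 0 < a i)
    (hq : ∀ i, q i ∈ Set.Ioo (0 : ℝ) 1) (hc : ∀ i, c i ∈ Set.Ico (0 : ℝ) 1)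
    (hqc : ∀ i, q i + c i < 1)
    (haBar : ∀ j, aBar j = a j * (1 - c j))
    (β : ℝ)
    (hβ : β = (∑ j, v j * a j * q j) / (∑ j, v j * aBar j)) :
    0 < β ∧ β < 1 ∧
      ∀ i, (∑' m : ℕ, (1 - β) ^ m * (v i * a i * q i / ∑ j, v j * aBar j)) =
        v i * a i * q i / ∑ j, v j * a j * q j := by
  set N := ∑ j, v j * a j * q j with hN
  set D := ∑ j, v j * aBar j with hD
  have hNpos : 0 < N := by
    apply Finset.sum_pos
    · intro j _
      exact mul_pos (mul_pos (hv j) (ha j)) (hq j).1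
    · exact Finset.univ_nonempty
  have hlt : ∀ j, v j * a j * q j < v j * aBar j := by
    intro j
    rw [haBar j, ← mul_assoc]
    apply mul_lt_mul_of_pos_left _ (mul_pos (hv j) (ha j))
    linarith [hqc j, (hc j).2]
  have hND : N < D := Finset.sum_lt_sum_of_nonempty Finset.univ_nonempty
    (fun j _ => hlt j)
  have hDpos : 0 < D := hNpos.trans hND
  have hβpos : 0 < β := by rw [hβ]; positivity
  have hβlt : β < 1 := by rw [hβ]; exact (div_lt_one hDpos).2 hND
  refine ⟨hβpos, hβlt, fun i => ?_⟩
  have hgeo : ∑' m : ℕ, (1 - β) ^ m = (1 - (1 - β))⁻¹ :=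
    tsum_geometric_of_lt_one (by linarith) (by linarith)
  rw [tsum_mul_right, hgeo]
  have h1 : (1 - (1 - β)) = β := by ring
  rw [h1, hβ]
  field_simp
end

section
/- Let n ≥ 1 and for each i ∈ {1,…,n} let v_i > 0, ā_i > 0, q̄_i ≥ 0 be real numbers with v_1 ≥ v_2 ≥ … ≥ v_n and q̄_1 ≥ q̄_2 ≥ … ≥ q̄_n. Then (Σ_{i=1}^n v_i ā_i q̄_i)/(Σ_{j=1}^n v_j ā_j) ≥ (Σ_{i=1}^n ā_i q̄_i)/(Σ_{j=1}^n ā_j). That is, position bias increases the expected number of purchases under the quality-ranking policy in the continuation market. -/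
/-- (Position bias helps the quality ranking.) If `v i > 0`,
`ā i > 0`, `q̄ i ≥ 0` with `v` and `q̄` nonincreasing (the quality ranking places
the products of highest continuation quality in the most visible positions), then
`(∑ i, v i * ā i * q̄ i) / (∑ j, v j * ā j) ≥ (∑ i, ā i * q̄ i) / (∑ j, ā j)`. -/
theorem stmt14 (n : ℕ) (v aBar qBar : Fin (n + 1) → ℝ)
    (hv : ∀ i, 0 < v i) (haBar : ∀ i, 0 < aBar i) (hqBar : ∀ i, 0 ≤ qBar i)
    (hvmono : ∀ i j : Fin (n + 1), i ≤ j → v j ≤ v i)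
    (hqmono : ∀ i j : Fin (n + 1), i ≤ j → qBar j ≤ qBar i) :
    (∑ i, v i * aBar i * qBar i) / (∑ j, v j * aBar j) ≥
      (∑ i, aBar i * qBar i) / (∑ j, aBar j) := by
  have hSa : (0:ℝ) < ∑ j, aBar j :=
    Finset.sum_pos (fun j _ => haBar j) Finset.univ_nonempty
  have hSva : (0:ℝ) < ∑ j, v j * aBar j :=
    Finset.sum_pos (fun j _ => mul_pos (hv j) (haBar j)) Finset.univ_nonempty
  rw [ge_iff_le, div_le_div_iff₀ hSa hSva]
  -- goal: (∑ aq) * (∑ va) ≤ (∑ vaq) * (∑ a)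
  have hterm : ∀ i j : Fin (n + 1),
      0 ≤ aBar i * aBar j * ((v i - v j) * (qBar i - qBar j)) := by
    intro i j
    have h : 0 ≤ (v i - v j) * (qBar i - qBar j) := by
      rcases le_total i j with h | h
      · have h1 := hvmono i j h; have h2 := hqmono i j h
        nlinarith
      · have h1 := hvmono j i h; have h2 := hqmono j i h
        nlinarith
    exact mul_nonneg (mul_nonneg (haBar i).le (haBar j).le) h
  have hpos : (0:ℝ) ≤
      ∑ i, ∑ j, aBar i * aBar j * ((v i - v j) * (qBar i - qBar j)) :=
    Finset.sum_nonneg fun i _ => Finset.sum_nonneg fun j _ => hterm i j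
  have expand : ∑ i, ∑ j, aBar i * aBar j * ((v i - v j) * (qBar i - qBar j))
      = 2 * ((∑ i, v i * aBar i * qBar i) * (∑ j, aBar j))
        - 2 * ((∑ i, aBar i * qBar i) * (∑ j, v j * aBar j)) := by
    have step : ∑ i, ∑ j, aBar i * aBar j * ((v i - v j) * (qBar i - qBar j))
        = ∑ i, ∑ j, ((v i * aBar i * qBar i) * aBar j
            + (v j * aBar j * qBar j) * aBar i
            - (aBar i * qBar i) * (v j * aBar j)
            - (aBar j * qBar j) * (v i * aBar i)) := by
      refine Finset.sum_congr rfl fun i _ => Finset.sum_congr rfl fun j _ => ?_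
      ring
    have T1 : ∑ i, ∑ j : Fin (n+1), (v i * aBar i * qBar i) * aBar j
        = (∑ i, v i * aBar i * qBar i) * (∑ j, aBar j) := by
      rw [← Finset.sum_mul_sum]
    have T2 : ∑ i : Fin (n+1), ∑ j, (v j * aBar j * qBar j) * aBar i
        = (∑ i, v i * aBar i * qBar i) * (∑ j, aBar j) := by
      rw [Finset.sum_comm, ← Finset.sum_mul_sum]
    have T3 : ∑ i, ∑ j : Fin (n+1), (aBar i * qBar i) * (v j * aBar j)
        = (∑ i, aBar i * qBar i) * (∑ j, v j * aBar j) := by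
      rw [← Finset.sum_mul_sum]
    have T4 : ∑ i : Fin (n+1), ∑ j, (aBar j * qBar j) * (v i * aBar i)
        = (∑ i, aBar i * qBar i) * (∑ j, v j * aBar j) := by
      rw [Finset.sum_comm, ← Finset.sum_mul_sum]
    rw [step]
    simp only [Finset.sum_sub_distrib, Finset.sum_add_distrib]
    rw [T1, T2, T3, T4]; ring
  linarith [hpos, expand.symm ▸ hpos]
end

section
/- Let n ≥ 1 and for each product i ∈ {1,…,n} let v_i > 0, a_i > 0, q_i ∈ (0,1), c_i ∈ [0,1), with v_1 ≥ … ≥ v_n, q_1 ≥ … ≥ q_n, and q̄_1 ≥ … ≥ q̄_n where q̄_i = q_i/(1 − c_i) and ā_i = a_i(1 − c_i). Set λ̄ = (Σ_i v_i ā_i q̄_i)/(Σ_i v_i ā_i). Then Σ_{j=1}^n [ v_j² ā_j q̄_j (1 − c_j) / (Σ_{i=1}^n v_i ā_i + v_j(1 − c_j)) ] · (q̄_j − λ̄) ≥ 0. -/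
/-- Under the quality ranking (visibilities, qualities, and
continuation qualities all nonincreasing), with `q̄ i = q i / (1 - c i)`,
`ā i = a i * (1 - c i)` and `λ̄ = (∑ i, v i * ā i * q̄ i) / (∑ i, v i * ā i)`,
the key sum in the social-influence argument is nonnegative:
`∑ j, (v j ^ 2 * ā j * q̄ j * (1 - c j) / (∑ i, v i * ā i + v j * (1 - c j))) * (q̄ j - λ̄) ≥ 0`. -/
theorem stmt15 (n : ℕ) (v a q c qBar aBar : Fin (n + 1) → ℝ)
    (hv : ∀ i, 0 < v i) (ha : ∀ i, 0 < a i)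
    (hq : ∀ i, q i ∈ Set.Ioo (0 : ℝ) 1) (hc : ∀ i, c i ∈ Set.Ico (0 : ℝ) 1)
    (hvmono : ∀ i j : Fin (n + 1), i ≤ j → v j ≤ v i)
    (hqmono : ∀ i j : Fin (n + 1), i ≤ j → q j ≤ q i)
    (hqBar : ∀ i, qBar i = q i / (1 - c i))
    (haBar : ∀ i, aBar i = a i * (1 - c i))
    (hqBarmono : ∀ i j : Fin (n + 1), i ≤ j → qBar j ≤ qBar i)
    (lamBar : ℝ)
    (hlamBar : lamBar = (∑ i, v i * aBar i * qBar i) / (∑ i, v i * aBar i)) :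
    0 ≤ ∑ j, (v j ^ 2 * aBar j * qBar j * (1 - c j) /
        ((∑ i, v i * aBar i) + v j * (1 - c j))) * (qBar j - lamBar) := by
  set u : Fin (n + 1) → ℝ := fun i => v i * aBar i with hu_def
  have hc1 : ∀ i, 0 < 1 - c i := fun i => by have := (hc i).2; linarith
  have hu : ∀ i, 0 < u i := fun i =>
    mul_pos (hv i) ((haBar i) ▸ mul_pos (ha i) (hc1 i))
  set S : ℝ := ∑ i, u i with hS_def
  have hS : 0 < S := Finset.sum_pos (fun i _ => hu i) Finset.univ_nonempty
  have hD : ∀ j, 0 < S + v j * (1 - c j) := fun j =>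
    add_pos hS (mul_pos (hv j) (hc1 j))
  set f : Fin (n + 1) → ℝ := fun j => v j * q j / (S + v j * (1 - c j)) with hf_def
  set g : Fin (n + 1) → ℝ := fun j => qBar j - lamBar with hg_def
  -- f is nonincreasing
  have hf : ∀ i j : Fin (n + 1), i ≤ j → f j ≤ f i := by
    intro i j hij
    have h1 : v j * q j ≤ v i * q i :=
      mul_le_mul (hvmono i j hij) (hqmono i j hij) (hq j).1.le (hv i).le
    have h2 : q j * (1 - c i) ≤ q i * (1 - c j) := by
      have := hqBarmono i j hij
      rw [hqBar i, hqBar j] at this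
      exact (div_le_div_iff₀ (hc1 j) (hc1 i)).mp this
    show v j * q j / (S + v j * (1 - c j)) ≤ v i * q i / (S + v i * (1 - c i))
    rw [div_le_div_iff₀ (hD j) (hD i)]
    nlinarith [mul_le_mul_of_nonneg_right h1 hS.le,
      mul_le_mul_of_nonneg_left h2 (mul_pos (hv i) (hv j)).le]
  have hg : ∀ i j : Fin (n + 1), i ≤ j → g j ≤ g i := fun i j hij =>
    sub_le_sub_right (hqBarmono i j hij) _
  -- the target sum equals ∑ u f g
  have hTT : (∑ j, (v j ^ 2 * aBar j * qBar j * (1 - c j) /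
        ((∑ i, v i * aBar i) + v j * (1 - c j))) * (qBar j - lamBar))
      = ∑ j, u j * f j * g j := by
    apply Finset.sum_congr rfl
    intro j _
    have hqc : q j = qBar j * (1 - c j) := by
      rw [hqBar j, div_mul_cancel₀ _ (hc1 j).ne']
    show _ = u j * (v j * q j / (S + v j * (1 - c j))) * g j
    rw [hqc, hu_def, hg_def, hS_def]
    ring
  rw [hTT]
  -- ∑ u g = 0
  have hG : ∑ j, u j * g j = 0 := by
    have h1 : ∑ j, u j * g j = (∑ j, u j * qBar j) - lamBar * S := by
      simp only [hg_def, mul_sub, Finset.sum_sub_distrib, ← Finset.sum_mul]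
      ring
    have h2 : lamBar * S = ∑ j, u j * qBar j := by
      rw [hlamBar]
      exact div_mul_cancel₀ _ hS.ne'
    rw [h1, h2, sub_self]
  -- Chebyshev double sum
  have key : (0 : ℝ) ≤ ∑ j, ∑ k, u j * u k * (f j - f k) * (g j - g k) := by
    apply Finset.sum_nonneg
    intro j _
    apply Finset.sum_nonneg
    intro k _
    rcases le_total j k with h | h
    · have := mul_nonneg (sub_nonneg.mpr (hf j k h)) (sub_nonneg.mpr (hg j k h))
      nlinarith [mul_pos (hu j) (hu k)]
    · have := mul_nonneg (sub_nonneg.mpr (hf k j h)) (sub_nonneg.mpr (hg k j h))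
      nlinarith [mul_pos (hu j) (hu k)]
  have expand : (∑ j, ∑ k, u j * u k * (f j - f k) * (g j - g k))
      = 2 * S * (∑ j, u j * f j * g j)
        - 2 * (∑ j, u j * f j) * (∑ j, u j * g j) := by
    have inner : ∀ j, (∑ k, u j * u k * (f j - f k) * (g j - g k))
        = u j * f j * g j * S - u j * f j * (∑ k, u k * g k)
          - u j * g j * (∑ k, u k * f k) + u j * (∑ k, u k * f k * g k) := by
      intro j
      rw [hS_def]
      simp only [Finset.mul_sum]
      rw [← Finset.sum_sub_distrib, ← Finset.sum_sub_distrib, ← Finset.sum_add_distrib]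
      apply Finset.sum_congr rfl
      intro k _
      ring
    rw [Finset.sum_congr rfl (fun j _ => inner j)]
    simp only [Finset.sum_add_distrib, Finset.sum_sub_distrib, ← Finset.sum_mul]
    rw [← hS_def]
    ring
  rw [expand, hG] at key
  nlinarith [key, hS]
end

section
/- Let n ≥ 1 and for each product i ∈ {1,…,n} let v_i > 0, a_i > 0, q_i ∈ (0,1), c_i ∈ [0,1), with v_1 ≥ … ≥ v_n, q_1 ≥ … ≥ q_n, and q̄_1 ≥ … ≥ q̄_n where q̄_i = q_i/(1 − c_i) and ā_i = a_i(1 − c_i). Set S = Σ_i v_i ā_i and λ̄ = (Σ_i v_i ā_i q̄_i)/S. Then Σ_{j=1}^n [ (v_j ā_j q̄_j / S) · (Σ_i v_i ā_i q̄_i + v_j(1 − c_j) q̄_j)/(S + v_j(1 − c_j)) ] + (1 − λ̄) · λ̄ ≥ λ̄. That is, under the quality ranking with social influence, the expected number of purchases at step t+1 conditional on step t is at least the expected number of purchases at step t. -/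
lemma myCheb {n : ℕ} (u t s : Fin n → ℝ) (hu : ∀ i, 0 ≤ u i)
    (ht : ∀ i j, i ≤ j → t j ≤ t i) (hs : ∀ i j, i ≤ j → s j ≤ s i) :
    (∑ i, u i * t i) * (∑ i, u i * s i) ≤ (∑ i, u i) * (∑ i, u i * (t i * s i)) := by
  have key : 0 ≤ ∑ i, ∑ j, u i * u j * ((t i - t j) * (s i - s j)) := by
    apply Finset.sum_nonneg; intro i _
    apply Finset.sum_nonneg; intro j _
    rcases le_total i j with h | h
    · exact mul_nonneg (mul_nonneg (hu i) (hu j))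
        (mul_nonneg (sub_nonneg.2 (ht i j h)) (sub_nonneg.2 (hs i j h)))
    · have hr : (t i - t j) * (s i - s j) = (t j - t i) * (s j - s i) := by ring
      rw [hr]
      exact mul_nonneg (mul_nonneg (hu i) (hu j))
        (mul_nonneg (sub_nonneg.2 (ht j i h)) (sub_nonneg.2 (hs j i h)))
  have hid : ∑ i, ∑ j, u i * u j * ((t i - t j) * (s i - s j))
      = 2 * (∑ i, u i) * (∑ i, u i * (t i * s i))
        - 2 * (∑ i, u i * t i) * (∑ i, u i * s i) := by
    have e1 : ∀ i : Fin n, ∑ j, u i * u j * ((t i - t j) * (s i - s j))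
        = u i * (t i * s i) * (∑ j, u j) - u i * t i * (∑ j, u j * s j)
          - u i * s i * (∑ j, u j * t j) + u i * (∑ j, u j * (t j * s j)) := by
      intro i
      rw [Finset.mul_sum, Finset.mul_sum, Finset.mul_sum, Finset.mul_sum,
        ← Finset.sum_sub_distrib, ← Finset.sum_sub_distrib, ← Finset.sum_add_distrib]
      apply Finset.sum_congr rfl; intro j _; ring
    rw [Finset.sum_congr rfl (fun i _ => e1 i), Finset.sum_add_distrib,
      Finset.sum_sub_distrib, Finset.sum_sub_distrib,
      ← Finset.sum_mul, ← Finset.sum_mul, ← Finset.sum_mul, ← Finset.sum_mul]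
    ring
  linarith [hid.le, hid.ge]

/-- (Social influence is beneficial under the quality ranking in
the continuation market.) Under the quality ranking (visibilities, qualities, and
continuation qualities all nonincreasing), with `q̄ i = q i / (1 - c i)`,
`ā i = a i * (1 - c i)`, `S = ∑ i, v i * ā i` and `λ̄ = (∑ i, v i * ā i * q̄ i) / S`,
the conditional expected number of purchases at step `t+1` is at least `λ̄`:
`∑ j, (v j * ā j * q̄ j / S) * ((∑ i, v i * ā i * q̄ i + v j * (1 - c j) * q̄ j) / (S + v j * (1 - c j))) + (1 - λ̄) * λ̄ ≥ λ̄`. -/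
theorem stmt16 (n : ℕ) (v a q c qBar aBar : Fin (n + 1) → ℝ)
    (hv : ∀ i, 0 < v i) (ha : ∀ i, 0 < a i)
    (hq : ∀ i, q i ∈ Set.Ioo (0 : ℝ) 1) (hc : ∀ i, c i ∈ Set.Ico (0 : ℝ) 1)
    (hvmono : ∀ i j : Fin (n + 1), i ≤ j → v j ≤ v i)
    (hqmono : ∀ i j : Fin (n + 1), i ≤ j → q j ≤ q i)
    (hqBar : ∀ i, qBar i = q i / (1 - c i))
    (haBar : ∀ i, aBar i = a i * (1 - c i))
    (hqBarmono : ∀ i j : Fin (n + 1), i ≤ j → qBar j ≤ qBar i)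
    (S lamBar : ℝ)
    (hS : S = ∑ i, v i * aBar i)
    (hlamBar : lamBar = (∑ i, v i * aBar i * qBar i) / S) :
    lamBar ≤ (∑ j, (v j * aBar j * qBar j / S) *
        (((∑ i, v i * aBar i * qBar i) + v j * (1 - c j) * qBar j) /
          (S + v j * (1 - c j)))) + (1 - lamBar) * lamBar := by
  have h1c : ∀ i, 0 < 1 - c i := fun i => by have := (hc i).2; linarith
  have hSpos : 0 < S := by
    rw [hS]
    exact Finset.sum_pos (fun i _ => mul_pos (hv i)
      (by rw [haBar]; exact mul_pos (ha i) (h1c i))) Finset.univ_nonempty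
  have hdpos : ∀ j : Fin (n + 1), 0 < S + v j * (1 - c j) :=
    fun j => add_pos hSpos (mul_pos (hv j) (h1c j))
  set T := ∑ i, v i * aBar i * qBar i with hT
  -- monotonicity of t j = v j * q j / (S + v j * (1 - c j))
  have htmono : ∀ i j : Fin (n + 1), i ≤ j →
      v j * q j / (S + v j * (1 - c j)) ≤ v i * q i / (S + v i * (1 - c i)) := by
    intro i j hij
    have h3 := hqBarmono i j hij
    rw [hqBar i, hqBar j, div_le_div_iff₀ (h1c j) (h1c i)] at h3
    rw [div_le_div_iff₀ (hdpos j) (hdpos i)]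
    have hvq : v j * q j ≤ v i * q i :=
      mul_le_mul (hvmono i j hij) (hqmono i j hij) (hq j).1.le (hv i).le
    nlinarith [mul_le_mul_of_nonneg_left h3 (mul_nonneg (hv i).le (hv j).le),
      mul_le_mul_of_nonneg_right hvq hSpos.le]
  have hu : ∀ i : Fin (n + 1), 0 ≤ v i * aBar i := fun i =>
    mul_nonneg (hv i).le (by rw [haBar]; exact (mul_pos (ha i) (h1c i)).le)
  have key := myCheb (fun i => v i * aBar i)
    (fun k => v k * q k / (S + v k * (1 - c k))) qBar hu htmono hqBarmono
  rw [← hS, ← hT] at key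
  -- key : (∑ i, v i * aBar i * (v i * q i / (S + v i * (1 - c i)))) * T
  --        ≤ S * ∑ i, v i * aBar i * (v i * q i / (S + v i * (1 - c i)) * qBar i)
  have hterm : ∀ j : Fin (n + 1),
      v j * aBar j * qBar j / S * ((T + v j * (1 - c j) * qBar j) / (S + v j * (1 - c j)))
      = v j * aBar j * qBar j * (T / S ^ 2)
        + v j * aBar j * (v j * q j / (S + v j * (1 - c j)) * qBar j) * (1 / S)
        - v j * aBar j * (v j * q j / (S + v j * (1 - c j))) * (T / S ^ 2) := by
    intro j
    have h1 : (1 : ℝ) - c j ≠ 0 := (h1c j).ne'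
    have h2 : S + v j * (1 - c j) ≠ 0 := (hdpos j).ne'
    rw [hqBar j]
    field_simp
    ring
  rw [Finset.sum_congr rfl (fun j _ => hterm j), Finset.sum_sub_distrib,
    Finset.sum_add_distrib, ← Finset.sum_mul, ← Finset.sum_mul, ← Finset.sum_mul, ← hT]
  set A := ∑ i, v i * aBar i * (v i * q i / (S + v i * (1 - c i))) with hA
  set B := ∑ i, v i * aBar i * (v i * q i / (S + v i * (1 - c i)) * qBar i) with hB
  have h2 : A * (T / S ^ 2) ≤ B * (1 / S) := by
    rw [show A * (T / S ^ 2) = A * T / S ^ 2 by ring, show B * (1 / S) = B / S by ring,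
      div_le_div_iff₀ (by positivity) hSpos]
    nlinarith [mul_le_mul_of_nonneg_right key hSpos.le]
  have e2 : T * (T / S ^ 2) + (1 - lamBar) * lamBar = lamBar := by
    rw [hlamBar]
    field_simp
    ring
  linarith [h2, e2]
end

section
/- There exists a trial-offer market instance in which the performance ranking differs between the market with and without continuation. Concretely, for n = 3 with visibilities v = (0.8, 0.5, 0.1), qualities q = (0.9, 0.2, 0.6), appeals a = (0.9, 0.1, 0.3), and continuation probabilities c_i = 0.8 · q_i^{0.7} (1 − q_i): the permutation assigning products (1,2,3) to positions (1,2,3) strictly maximizes λ(σ) = Σ_i p_i(σ) q_i over all 6 permutations, while the permutation assigning products (1,3,2) to positions (1,2,3) strictly maximizes λ̄(σ) = (Σ_i p_i(σ) q_i)/(1 − Σ_i p_i(σ) c_i); in particular the two maximizers are distinct. -/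
private lemma rpow_bnds (x l u : ℝ) (hx : 0 < x) (hl : 0 ≤ l) (hu : 0 ≤ u)
    (h1 : l^10 < x^7) (h2 : x^7 < u^10) :
    l < x ^ (0.7:ℝ) ∧ x ^ (0.7:ℝ) < u := by
  have hxp : 0 < x ^ (0.7:ℝ) := Real.rpow_pos_of_pos hx _
  have key : (x ^ (0.7:ℝ))^10 = x^7 := by
    rw [← Real.rpow_natCast (x ^ (0.7:ℝ)) 10, ← Real.rpow_mul hx.le,
      ← Real.rpow_natCast x 7]
    norm_num
  constructor
  · exact lt_of_pow_lt_pow_left₀ 10 hxp.le (by rw [key]; exact h1)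
  · exact lt_of_pow_lt_pow_left₀ 10 hu (by rw [key]; exact h2)

set_option maxHeartbeats 2000000 in
set_option maxRecDepth 100000 in
/-- A concrete 3-product instance where the performance ranking
differs between the markets with and without continuation. Products are indexed by
`Fin 3` (product `i+1` of the paper is index `i`); a ranking `σ` assigns product `i`
to position `σ i`. With visibilities `(0.8, 0.5, 0.1)`, qualities `(0.9, 0.2, 0.6)`,
appeals `(0.9, 0.1, 0.3)`, and `c i = 0.8 * (q i)^(0.7) * (1 - q i)` (real power):
the identity permutation (products `(1,2,3)` in positions `(1,2,3)`) strictly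
maximizes `λ`, while the permutation `Equiv.swap 1 2` (products `(1,3,2)` in
positions `(1,2,3)`) strictly maximizes `λ̄`; the two maximizers are distinct. -/
theorem stmt17 :
    ∀ v q a c : Fin 3 → ℝ,
      v = ![0.8, 0.5, 0.1] → q = ![0.9, 0.2, 0.6] → a = ![0.9, 0.1, 0.3] →
      (∀ i, c i = 0.8 * q i ^ (0.7 : ℝ) * (1 - q i)) →
      ∀ p : Equiv.Perm (Fin 3) → Fin 3 → ℝ,
        (∀ σ i, p σ i = v (σ i) * a i / ∑ j, v (σ j) * a j) →
        ∀ lam lamBar : Equiv.Perm (Fin 3) → ℝ,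
          (∀ σ, lam σ = ∑ i, p σ i * q i) →
          (∀ σ, lamBar σ = (∑ i, p σ i * q i) / (1 - ∑ i, p σ i * c i)) →
          (∀ σ : Equiv.Perm (Fin 3), σ ≠ 1 → lam σ < lam 1) ∧
          (∀ σ : Equiv.Perm (Fin 3), σ ≠ Equiv.swap 1 2 →
            lamBar σ < lamBar (Equiv.swap 1 2)) ∧
          (1 : Equiv.Perm (Fin 3)) ≠ Equiv.swap 1 2 := by
  intro v q a c hv hq ha hc p hp lam lamBar hlam hlamBar
  subst hv hq ha
  have hA := rpow_bnds 0.9 0.9289 0.9290 (by norm_num) (by norm_num) (by norm_num)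
    (by norm_num) (by norm_num)
  have hB := rpow_bnds 0.2 0.3241 0.3242 (by norm_num) (by norm_num) (by norm_num)
    (by norm_num) (by norm_num)
  have hC := rpow_bnds 0.6 0.6993 0.6994 (by norm_num) (by norm_num) (by norm_num)
    (by norm_num) (by norm_num)
  have hc0 := hc 0
  have hc1 := hc 1
  have hc2 := hc 2
  norm_num at hc0 hc1 hc2
  simp only [Matrix.cons_val] at hc2
  have hb0 : (0.0743:ℝ) < c 0 ∧ c 0 < 0.0744 := by
    constructor <;> rw [hc0] <;> nlinarith [hA.1, hA.2]
  have hb1 : (0.2074:ℝ) < c 1 ∧ c 1 < 0.2075 := by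
    constructor <;> rw [hc1] <;> nlinarith [hB.1, hB.2]
  have hb2 : (0.2237:ℝ) < c 2 ∧ c 2 < 0.2239 := by
    constructor <;> rw [hc2] <;> nlinarith [hC.1, hC.2]
  obtain ⟨hb0l, hb0u⟩ := hb0
  obtain ⟨hb1l, hb1u⟩ := hb1
  obtain ⟨hb2l, hb2u⟩ := hb2
  refine ⟨?_, ?_, by decide⟩
  · intro σ hσ
    rw [hlam, hlam]
    simp only [hp]
    obtain rfl | rfl | rfl | rfl | rfl | rfl := (show ∀ τ : Equiv.Perm (Fin 3), τ = 1 ∨ τ = Equiv.swap 1 2 ∨ τ = Equiv.swap 0 1 ∨ τ = Equiv.swap 0 2 ∨ τ = Equiv.swap 0 1 * Equiv.swap 1 2 ∨ τ = Equiv.swap 1 2 * Equiv.swap 0 1 by decide) σ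
    · exact absurd (by decide) hσ
    all_goals simp only [Fin.sum_univ_three, Equiv.Perm.mul_apply, Equiv.Perm.one_apply, Equiv.swap_apply_left, Equiv.swap_apply_right, Equiv.swap_apply_of_ne_of_ne, ne_eq, Fin.reduceEq, not_false_eq_true, Matrix.cons_val]
    all_goals norm_num [Fin.sum_univ_three, Equiv.swap_apply_def, Fin.ext_iff]
  · have hswap : (0.931:ℝ) < lamBar (Equiv.swap 1 2) := by
      rw [hlamBar]
      simp only [hp]
      simp only [Fin.sum_univ_three, Equiv.Perm.mul_apply, Equiv.Perm.one_apply, Equiv.swap_apply_left, Equiv.swap_apply_right, Equiv.swap_apply_of_ne_of_ne, ne_eq, Fin.reduceEq, not_false_eq_true, Matrix.cons_val]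
      norm_num [Fin.sum_univ_three, Equiv.swap_apply_def, Fin.ext_iff]
      rw [lt_div_iff₀ (by linarith)]
      linarith
    intro σ hσ
    have hlt : lamBar σ < 0.931 := by
      rw [hlamBar]
      simp only [hp]
      obtain rfl | rfl | rfl | rfl | rfl | rfl := (show ∀ τ : Equiv.Perm (Fin 3), τ = 1 ∨ τ = Equiv.swap 1 2 ∨ τ = Equiv.swap 0 1 ∨ τ = Equiv.swap 0 2 ∨ τ = Equiv.swap 0 1 * Equiv.swap 1 2 ∨ τ = Equiv.swap 1 2 * Equiv.swap 0 1 by decide) σ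
      on_goal 2 => exact absurd (by decide) hσ
      all_goals {
        simp only [Fin.sum_univ_three, Equiv.Perm.mul_apply, Equiv.Perm.one_apply, Equiv.swap_apply_left, Equiv.swap_apply_right, Equiv.swap_apply_of_ne_of_ne, ne_eq, Fin.reduceEq, not_false_eq_true, Matrix.cons_val]
        norm_num [Fin.sum_univ_three, Equiv.swap_apply_def, Fin.ext_iff]
        rw [div_lt_iff₀ (by linarith)]
        linarith }
    linarith
end
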